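/- For positive integers n, p, k with 1 ≤ k ≤ n and 1 ≤ p ≤ n, B(n,p,k) = (n/p) · Σ_{i=0}^{k-1} C(n-p+i, n-p)·C(p, i+1)·C(n-p, k-i-1), where B(n,p,k) = (n/k)·Σ_{r≥0} C(p,r)·C(n-p,r)·C(n-r-1,k-r-1). -/

import Mathlib

open Finset

/-- Binomial coefficient `C(a,b)` for integers, with `C(a,b) = 0` unless `0 ≤ b ≤ a`. -/
def C (a b : ℤ) : ℚ := if 0 ≤ b ∧ b ≤ a then (Nat.choose a.toNat b.toNat : ℚ) else 0

lemma C_natCast (a b : ℕ) : C a b = (a.choose b : ℚ) := by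
  unfold C
  by_cases h : b ≤ a
  · rw [if_pos ⟨Int.natCast_nonneg b, Int.ofNat_le.2 h⟩, Int.toNat_natCast, Int.toNat_natCast]
  · rw [if_neg, Nat.choose_eq_zero_of_lt (lt_of_not_ge h), Nat.cast_zero]
    rintro ⟨-, h2⟩
    exact h (Int.ofNat_le.1 h2)

lemma C_neg {a b : ℤ} (h : b < 0) : C a b = 0 := by
  unfold C
  rw [if_neg]
  rintro ⟨h1, -⟩; omega

lemma C_lt {a b : ℤ} (h : a < b) : C a b = 0 := by
  unfold C
  rw [if_neg]
  rintro ⟨-, h2⟩; omega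

lemma C_pascal (a : ℕ) (b : ℤ) : C ((a : ℤ) + 1) (b + 1) = C a b + C a (b + 1) := by
  rcases lt_trichotomy b (-1) with hb | hb | hb
  · rw [C_neg (by omega), C_neg (by omega), C_neg (by omega)]; norm_num
  · subst hb
    have h1 : ((a : ℤ) + 1) = ((a + 1 : ℕ) : ℤ) := by push_cast; ring
    have h2 : (-1 : ℤ) + 1 = ((0 : ℕ) : ℤ) := by norm_num
    rw [h2, h1, C_natCast, C_natCast, C_neg (show (-1:ℤ) < 0 by norm_num)]
    simp
  · have hb0 : 0 ≤ b := by omega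
    lift b to ℕ using hb0
    have h1 : ((a : ℤ) + 1) = ((a + 1 : ℕ) : ℤ) := by push_cast; ring
    have h2 : ((b : ℤ) + 1) = ((b + 1 : ℕ) : ℤ) := by push_cast; ring
    rw [h1, h2, C_natCast, C_natCast, C_natCast, Nat.choose_succ_succ]
    push_cast; ring

lemma C_vandermonde (a b m : ℕ) :
    C ((a : ℤ) + b) m = ∑ t ∈ range (m + 1), C a t * C b ((m : ℤ) - t) := by
  have h1 : ((a : ℤ) + b) = ((a + b : ℕ) : ℤ) := by push_cast; ring
  rw [h1, C_natCast, Nat.add_choose_eq, Finset.Nat.sum_antidiagonal_eq_sum_range_succ_mk]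
  push_cast
  refine Finset.sum_congr rfl fun t ht => ?_
  have htm : t ≤ m := by simp only [Finset.mem_range] at ht; omega
  have h2 : ((m : ℤ) - t) = ((m - t : ℕ) : ℤ) := by omega
  rw [C_natCast, h2, C_natCast]

lemma absorb1 (p i : ℕ) (hp : 1 ≤ p) :
    ((i : ℚ) + 1) * C p ((i : ℤ) + 1) = p * C ((p : ℤ) - 1) i := by
  have h1 : ((i : ℤ) + 1) = ((i + 1 : ℕ) : ℤ) := by push_cast; ring
  have h2 : ((p : ℤ) - 1) = ((p - 1 : ℕ) : ℤ) := by omega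
  rw [h1, h2, C_natCast, C_natCast]
  have := Nat.add_one_mul_choose_eq (p - 1) i
  have hps : p - 1 + 1 = p := by omega
  rw [hps] at this
  have h := congrArg (fun x : ℕ => (x : ℚ)) this
  push_cast at h
  linear_combination -h

lemma absorb2 (q m : ℕ) :
    (m : ℚ) * C q m = q * C ((q : ℤ) - 1) ((m : ℤ) - 1) := by
  rcases Nat.eq_zero_or_pos m with rfl | hm
  · simp only [Nat.cast_zero]
    rw [C_neg (show (0:ℤ) - 1 < 0 by norm_num)]; norm_num
  rcases Nat.eq_zero_or_pos q with rfl | hq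
  · simp only [Nat.cast_zero]
    rw [C_lt (show (0:ℤ) < m by exact_mod_cast hm)]; norm_num
  have h1 : ((q : ℤ) - 1) = ((q - 1 : ℕ) : ℤ) := by omega
  have h2 : ((m : ℤ) - 1) = ((m - 1 : ℕ) : ℤ) := by omega
  rw [h1, h2, C_natCast, C_natCast]
  have := Nat.add_one_mul_choose_eq (q - 1) (m - 1)
  have hqs : q - 1 + 1 = q := by omega
  have hms : m - 1 + 1 = m := by omega
  rw [hqs, hms] at this
  have h := congrArg (fun x : ℕ => (x : ℚ)) this
  push_cast at h
  linear_combination -h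

lemma absorb3 (q i : ℕ) :
    (q : ℚ) * C ((q : ℤ) + i) i = ((i : ℚ) + 1) * C ((q : ℤ) + i) ((i : ℤ) + 1) := by
  have h1 : ((q : ℤ) + i) = ((q + i : ℕ) : ℤ) := by push_cast; ring
  have h2 : ((i : ℤ) + 1) = ((i + 1 : ℕ) : ℤ) := by push_cast; ring
  rw [h1, h2, C_natCast, C_natCast]
  have := Nat.choose_succ_right_eq (q + i) i
  have hqi : q + i - i = q := by omega
  rw [hqi] at this
  have h := congrArg (fun x : ℕ => (x : ℚ)) this
  push_cast at h
  linear_combination -h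

lemma C_symm_add (q i : ℕ) : C ((q : ℤ) + i) q = C ((q : ℤ) + i) i := by
  have h1 : ((q : ℤ) + i) = ((q + i : ℕ) : ℤ) := by push_cast; ring
  rw [h1, C_natCast, C_natCast]
  congr 1
  have := Nat.choose_symm (show q ≤ q + i by omega)
  simpa using this.symm

lemma C_inner_sum (p q j : ℕ) :
    ∑ r ∈ range (j + 1), C p r * C q r * C ((p : ℤ) - r) ((j : ℤ) - r)
      = C p j * C ((q : ℤ) + j) j := by
  have key : ∀ r ∈ range (j + 1),
      C p r * C q r * C ((p : ℤ) - r) ((j : ℤ) - r) = C p j * C j r * C q r := by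
    intro r hr
    have hrj : r ≤ j := by simp only [mem_range] at hr; omega
    by_cases hjp : j ≤ p
    · have hrp : r ≤ p := le_trans hrj hjp
      have h1 : ((p : ℤ) - r) = ((p - r : ℕ) : ℤ) := by omega
      have h2 : ((j : ℤ) - r) = ((j - r : ℕ) : ℤ) := by omega
      rw [h1, h2]
      simp only [C_natCast]
      have := Nat.choose_mul (n := p) hrj
      have h := congrArg (fun x : ℕ => (x : ℚ)) this
      push_cast at h
      linear_combination (-(q.choose r : ℚ)) * h
    · push_neg at hjp
      rw [C_lt (show (p : ℤ) < j by exact_mod_cast hjp)]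
      by_cases hrp : r ≤ p
      · have h1 : ((p : ℤ) - r) = ((p - r : ℕ) : ℤ) := by omega
        have h2 : ((j : ℤ) - r) = ((j - r : ℕ) : ℤ) := by omega
        have hlt : (p - r : ℕ) < (j - r : ℕ) := by omega
        rw [h1, h2, C_natCast (p-r) (j-r), Nat.choose_eq_zero_of_lt hlt]
        norm_num
      · push_neg at hrp
        rw [C_lt (show (p : ℤ) < r by exact_mod_cast hrp)]
        ring
  rw [Finset.sum_congr rfl key]
  have hrefl : ∑ r ∈ range (j + 1), C p j * C j r * C q r
      = ∑ t ∈ range (j + 1), C p j * C j (j - t : ℕ) * C q (j - t : ℕ) := by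
    rw [← Finset.sum_range_reflect (fun r => C p j * C j r * C q r) (j + 1)]
    refine Finset.sum_congr rfl fun t ht => ?_
    congr 2 <;> simp
  rw [hrefl]
  have vdm := C_vandermonde j q j
  have : ∑ t ∈ range (j + 1), C p j * C j (j - t : ℕ) * C q (j - t : ℕ)
      = C p j * ∑ t ∈ range (j + 1), C j t * C q ((j : ℤ) - t) := by
    rw [Finset.mul_sum]
    refine Finset.sum_congr rfl fun t ht => ?_
    have htj : t ≤ j := by simp only [mem_range] at ht; omega
    have hsym : C j (j - t : ℕ) = C j t := by
      rw [C_natCast, C_natCast]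
      exact_mod_cast Nat.choose_symm htj
    have hc : ((j - t : ℕ) : ℤ) = (j : ℤ) - t := by omega
    rw [hsym, hc]
    ring
  rw [this, ← vdm]
  have : ((j : ℤ) + q) = ((q : ℤ) + j) := by ring
  rw [this]

lemma stepA (p q k : ℕ) (hq : 1 ≤ q) (hk : 1 ≤ k) :
    ∑ r ∈ range k, C p r * C q r * C ((p : ℤ) + q - 1 - r) ((k : ℤ) - 1 - r)
      = ∑ j ∈ range k, C p j * C ((q : ℤ) + j) j * C ((q : ℤ) - 1) ((k : ℤ) - 1 - j) := by
  have expand : ∀ r ∈ range k,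
      C p r * C q r * C ((p : ℤ) + q - 1 - r) ((k : ℤ) - 1 - r)
        = ∑ j ∈ range k,
            C p r * C q r * C ((p : ℤ) - r) ((j : ℤ) - r) * C ((q : ℤ) - 1) ((k : ℤ) - 1 - j) := by
    intro r hr
    have hrk : r < k := mem_range.1 hr
    by_cases hrp : r ≤ p
    · set a := p - r with ha
      set b := q - 1 with hb
      set m := k - 1 - r with hm
      have h1 : ((p : ℤ) + q - 1 - r) = ((a : ℤ) + b) := by omega
      have h2 : ((k : ℤ) - 1 - r) = ((m : ℤ)) := by omega
      rw [h1, h2, C_vandermonde a b m]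
      have hsplit : ∑ j ∈ range k,
          C p r * C q r * C ((p : ℤ) - r) ((j : ℤ) - r) * C ((q : ℤ) - 1) ((k : ℤ) - 1 - j)
          = ∑ t ∈ range (k - r),
            C p r * C q r * C ((p : ℤ) - r) (((r + t : ℕ) : ℤ) - r)
              * C ((q : ℤ) - 1) ((k : ℤ) - 1 - (r + t : ℕ)) := by
        have hsub : ∑ j ∈ range k,
            C p r * C q r * C ((p : ℤ) - r) ((j : ℤ) - r) * C ((q : ℤ) - 1) ((k : ℤ) - 1 - j)
            = ∑ j ∈ Ico r k,
            C p r * C q r * C ((p : ℤ) - r) ((j : ℤ) - r) * C ((q : ℤ) - 1) ((k : ℤ) - 1 - j) := by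
          symm
          refine Finset.sum_subset ?_ fun j hj hj' => ?_
          · intro x hx
            simp only [mem_Ico] at hx
            simp only [mem_range]
            omega
          · have hjr : j < r := by
              simp only [mem_range] at hj
              simp only [mem_Ico] at hj'
              omega
            rw [C_neg (show (j : ℤ) - r < 0 by omega)]
            ring
        rw [hsub, Finset.sum_Ico_eq_sum_range]
      rw [hsplit]
      have hkr : k - r = m + 1 := by omega
      rw [hkr, Finset.mul_sum]
      refine Finset.sum_congr rfl fun t ht => ?_
      have h3 : ((p : ℤ) - r) = ((a : ℤ)) := by omega
      have h4 : (((r + t : ℕ) : ℤ) - r) = ((t : ℤ)) := by push_cast; ring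
      have h5 : ((q : ℤ) - 1) = ((b : ℤ)) := by omega
      have h6 : ((k : ℤ) - 1 - (r + t : ℕ)) = ((m : ℤ) - t) := by push_cast; omega
      rw [h3, h4, h5, h6]
      ring
    · push_neg at hrp
      rw [C_lt (show (p : ℤ) < r by exact_mod_cast hrp)]
      rw [zero_mul, zero_mul]
      symm
      refine Finset.sum_eq_zero fun j hj => ?_
      ring
  rw [Finset.sum_congr rfl expand, Finset.sum_comm]
  refine Finset.sum_congr rfl fun j hj => ?_
  have hjk : j < k := mem_range.1 hj
  have hfactor : ∑ r ∈ range k,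
      C p r * C q r * C ((p : ℤ) - r) ((j : ℤ) - r) * C ((q : ℤ) - 1) ((k : ℤ) - 1 - j)
      = (∑ r ∈ range k, C p r * C q r * C ((p : ℤ) - r) ((j : ℤ) - r))
        * C ((q : ℤ) - 1) ((k : ℤ) - 1 - j) := by
    rw [Finset.sum_mul]
  rw [hfactor]
  have hrestrict : ∑ r ∈ range k, C p r * C q r * C ((p : ℤ) - r) ((j : ℤ) - r)
      = ∑ r ∈ range (j + 1), C p r * C q r * C ((p : ℤ) - r) ((j : ℤ) - r) := by
    symm
    refine Finset.sum_subset (Finset.range_subset_range.2 (by omega)) fun r hr hr' => ?_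
    have hrj : j < r := by simp only [mem_range] at hr hr' ⊢; omega
    rw [C_neg (show (j : ℤ) - r < 0 by omega)]
    ring
  rw [hrestrict, C_inner_sum]

lemma term_key (p q k i : ℕ) (hp : 1 ≤ p) (hq : 1 ≤ q) (hi : i < k) :
    (p : ℚ) * (C ((p : ℤ) - 1) i * C ((q : ℤ) + i) i * C ((q : ℤ) - 1) ((k : ℤ) - 1 - i))
      + (p : ℚ) * (C ((p : ℤ) - 1) i * C ((q : ℤ) + i + 1) ((i : ℤ) + 1)
          * C ((q : ℤ) - 1) ((k : ℤ) - 2 - i))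
      = (k : ℚ) * (C ((q : ℤ) + i) q * C p ((i : ℤ) + 1) * C q ((k : ℤ) - 1 - i)) := by
  set m := k - 1 - i with hm
  have hc1 : ((k : ℤ) - 1 - i) = ((m : ℤ)) := by omega
  have hc2 : ((k : ℤ) - 2 - i) = ((m : ℤ) - 1) := by omega
  have hZ : C ((q : ℤ) + i + 1) ((i : ℤ) + 1) = C ((q : ℤ) + i) i + C ((q : ℤ) + i) ((i : ℤ) + 1) := by
    have := C_pascal (q + i) ((i : ℤ))
    have h1 : ((q + i : ℕ) : ℤ) + 1 = (q : ℤ) + i + 1 := by push_cast; ring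
    have h2 : ((q + i : ℕ) : ℤ) = (q : ℤ) + i := by push_cast; ring
    rw [h1, h2] at this
    exact this
  have hQ : C (q : ℤ) ((m : ℤ)) = C ((q : ℤ) - 1) ((m : ℤ) - 1) + C ((q : ℤ) - 1) ((m : ℤ)) := by
    have := C_pascal (q - 1) ((m : ℤ) - 1)
    have h1 : ((q - 1 : ℕ) : ℤ) + 1 = (q : ℤ) := by omega
    have h2 : ((m : ℤ) - 1) + 1 = (m : ℤ) := by ring
    have h3 : ((q - 1 : ℕ) : ℤ) = (q : ℤ) - 1 := by omega
    rw [h1, h2, h3] at this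
    exact this
  have hW : C ((q : ℤ) + i) q = C ((q : ℤ) + i) i := C_symm_add q i
  have eA := absorb1 p i hp
  have eB := absorb2 q m
  have eC := absorb3 q i
  have hk' : (k : ℚ) = (i : ℚ) + 1 + m := by
    have : k = i + 1 + m := by omega
    exact_mod_cast congrArg (fun x : ℕ => (x : ℚ)) this
  rw [hc1, hc2, hZ, hQ, hW, hk']
  rw [hQ] at eB
  linear_combination (-(C ((q:ℤ)+i) i * (C ((q:ℤ)-1) ((m:ℤ)-1) + C ((q:ℤ)-1) (m:ℤ)))
      - C ((q:ℤ)+i) ((i:ℤ)+1) * C ((q:ℤ)-1) ((m:ℤ)-1)) * eA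
    + (-(C (p:ℤ) ((i:ℤ)+1) * C ((q:ℤ)+i) i)) * eB
    + (-(C (p:ℤ) ((i:ℤ)+1) * C ((q:ℤ)-1) ((m:ℤ)-1))) * eC

lemma key (p q k : ℕ) (hp : 1 ≤ p) (hq : 1 ≤ q) (hk : 1 ≤ k) :
    (p : ℚ) * ∑ r ∈ range k, C p r * C q r * C ((p : ℤ) + q - 1 - r) ((k : ℤ) - 1 - r)
      = (k : ℚ) * ∑ i ∈ range k, C ((q : ℤ) + i) q * C p ((i : ℤ) + 1) * C q ((k : ℤ) - 1 - i) := by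
  rw [stepA p q k hq hk]
  have hpj : ∀ j : ℕ, C (p : ℤ) j = C ((p : ℤ) - 1) ((j : ℤ) - 1) + C ((p : ℤ) - 1) (j : ℤ) := by
    intro j
    have h := C_pascal (p - 1) ((j : ℤ) - 1)
    have h1 : ((p - 1 : ℕ) : ℤ) + 1 = (p : ℤ) := by omega
    have h2 : ((j : ℤ) - 1) + 1 = (j : ℤ) := by ring
    have h3 : ((p - 1 : ℕ) : ℤ) = (p : ℤ) - 1 := by omega
    rw [h1, h2, h3] at h
    exact h
  have split : ∑ j ∈ range k, C p j * C ((q : ℤ) + j) j * C ((q : ℤ) - 1) ((k : ℤ) - 1 - j)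
      = (∑ j ∈ range k,
          C ((p : ℤ) - 1) ((j : ℤ) - 1) * C ((q : ℤ) + j) j * C ((q : ℤ) - 1) ((k : ℤ) - 1 - j))
        + ∑ j ∈ range k,
          C ((p : ℤ) - 1) (j : ℤ) * C ((q : ℤ) + j) j * C ((q : ℤ) - 1) ((k : ℤ) - 1 - j) := by
    rw [← Finset.sum_add_distrib]
    refine Finset.sum_congr rfl fun j hj => ?_
    rw [hpj j]
    ring
  rw [split]
  set g : ℕ → ℚ := fun j =>
    C ((p : ℤ) - 1) ((j : ℤ) - 1) * C ((q : ℤ) + j) j * C ((q : ℤ) - 1) ((k : ℤ) - 1 - j) with hg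
  have hshift : ∑ j ∈ range k, g j = ∑ i ∈ range k, g (i + 1) := by
    have e1 := Finset.sum_range_succ' g k
    have e2 := Finset.sum_range_succ g k
    have hg0 : g 0 = 0 := by
      rw [hg]
      simp only []
      rw [C_neg (show ((0 : ℕ) : ℤ) - 1 < 0 by norm_num)]
      ring
    have hgk : g k = 0 := by
      rw [hg]
      simp only []
      rw [C_neg (show (k : ℤ) - 1 - (k : ℕ) < 0 by omega)]
      ring
    rw [hg0, add_zero] at e1
    rw [hgk, add_zero] at e2
    rw [← e2, e1]
  rw [hshift]
  have hgsucc : ∀ i ∈ range k, g (i + 1)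
      = C ((p : ℤ) - 1) i * C ((q : ℤ) + i + 1) ((i : ℤ) + 1) * C ((q : ℤ) - 1) ((k : ℤ) - 2 - i) := by
    intro i hi
    rw [hg]
    simp only []
    have h1 : ((i + 1 : ℕ) : ℤ) - 1 = (i : ℤ) := by push_cast; ring
    have h2 : ((q : ℤ) + ((i + 1 : ℕ) : ℤ)) = (q : ℤ) + i + 1 := by push_cast; ring
    have h3 : ((i + 1 : ℕ) : ℤ) = (i : ℤ) + 1 := by push_cast; ring
    have h4 : ((k : ℤ) - 1 - ((i + 1 : ℕ) : ℤ)) = (k : ℤ) - 2 - i := by push_cast; ring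
    rw [h1, h2, h4, h3]
  rw [Finset.sum_congr rfl hgsucc]
  rw [mul_add, Finset.mul_sum, Finset.mul_sum, Finset.mul_sum, ← Finset.sum_add_distrib]
  refine Finset.sum_congr rfl fun i hi => ?_
  have hik : i < k := mem_range.1 hi
  have tk := term_key p q k i hp hq hik
  linear_combination tk

lemma key_zero (p k : ℕ) (hp : 1 ≤ p) (hk : 1 ≤ k) :
    (p : ℚ) * ∑ r ∈ range k, C p r * C (0 : ℕ) r * C ((p : ℤ) + (0 : ℕ) - 1 - r) ((k : ℤ) - 1 - r)
      = (k : ℚ) * ∑ i ∈ range k,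
          C (((0 : ℕ) : ℤ) + i) (0 : ℕ) * C p ((i : ℤ) + 1) * C (0 : ℕ) ((k : ℤ) - 1 - i) := by
  have hSA : ∑ r ∈ range k, C p r * C (0 : ℕ) r * C ((p : ℤ) + (0 : ℕ) - 1 - r) ((k : ℤ) - 1 - r)
      = C ((p : ℤ) - 1) ((k : ℤ) - 1) := by
    rw [Finset.sum_eq_single_of_mem 0 (mem_range.2 hk)]
    · simp only [Nat.cast_zero]
      have e1 : (p : ℤ) + 0 - 1 - 0 = (p : ℤ) - 1 := by ring
      have e2 : (k : ℤ) - 1 - 0 = (k : ℤ) - 1 := by ring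
      rw [e1, e2]
      have c1 : C (p : ℤ) (0 : ℤ) = 1 := by
        have : ((0 : ℕ) : ℤ) = (0 : ℤ) := rfl
        rw [← this, C_natCast]; simp
      have c2 : C (0 : ℤ) (0 : ℤ) = 1 := by
        have : ((0 : ℕ) : ℤ) = (0 : ℤ) := rfl
        rw [← this, C_natCast]; simp
      rw [c1, c2]
      ring
    · intro r hr hr0
      rw [C_lt (show ((0 : ℕ) : ℤ) < r by exact_mod_cast Nat.pos_of_ne_zero hr0)]
      ring
  have hSB : ∑ i ∈ range k,
      C (((0 : ℕ) : ℤ) + i) (0 : ℕ) * C p ((i : ℤ) + 1) * C (0 : ℕ) ((k : ℤ) - 1 - i)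
      = C (p : ℤ) (k : ℤ) := by
    rw [Finset.sum_eq_single_of_mem (k - 1) (mem_range.2 (by omega))]
    · simp only [Nat.cast_zero]
      have e1 : (0 : ℤ) + ((k - 1 : ℕ) : ℤ) = ((k - 1 : ℕ) : ℤ) := by ring
      have e2 : ((k - 1 : ℕ) : ℤ) + 1 = (k : ℤ) := by omega
      have e3 : (k : ℤ) - 1 - ((k - 1 : ℕ) : ℤ) = 0 := by omega
      rw [e1, e2, e3]
      have c1 : C ((k - 1 : ℕ) : ℤ) (0 : ℤ) = 1 := by
        have : ((0 : ℕ) : ℤ) = (0 : ℤ) := rfl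
        rw [← this, C_natCast]; simp
      have c2 : C (0 : ℤ) (0 : ℤ) = 1 := by
        have : ((0 : ℕ) : ℤ) = (0 : ℤ) := rfl
        rw [← this, C_natCast]; simp
      rw [c1, c2]
      ring
    · intro i hi hi0
      have hik : i < k := mem_range.1 hi
      simp only [Nat.cast_zero]
      rw [C_lt (show (0 : ℤ) < (k : ℤ) - 1 - i by omega)]
      ring
  rw [hSA, hSB]
  have e4 : (p : ℤ) - 1 = ((p - 1 : ℕ) : ℤ) := by omega
  have e5 : (k : ℤ) - 1 = ((k - 1 : ℕ) : ℤ) := by omega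
  rw [e4, e5, C_natCast, C_natCast]
  have h := Nat.add_one_mul_choose_eq (p - 1) (k - 1)
  have hps : p - 1 + 1 = p := by omega
  have hks : k - 1 + 1 = k := by omega
  rw [hps, hks] at h
  have h2 := congrArg (fun x : ℕ => (x : ℚ)) h
  push_cast at h2
  linear_combination h2

lemma key_all (p q k : ℕ) (hp : 1 ≤ p) (hk : 1 ≤ k) :
    (p : ℚ) * ∑ r ∈ range k, C p r * C q r * C ((p : ℤ) + q - 1 - r) ((k : ℤ) - 1 - r)
      = (k : ℚ) * ∑ i ∈ range k, C ((q : ℤ) + i) q * C p ((i : ℤ) + 1) * C q ((k : ℤ) - 1 - i) := by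
  rcases Nat.eq_zero_or_pos q with rfl | hq
  · exact key_zero p k hp hk
  · exact key p q k hp hq hk

/-- `B(n,p,k) = (n/k) · Σ_{r≥0} C(p,r)·C(n-p,r)·C(n-r-1,k-r-1)`. -/
def B (n p k : ℕ) : ℚ :=
  ((n : ℚ) / k) * ∑ r ∈ range (n + 1),
    C p r * C ((n : ℤ) - p) r * C ((n : ℤ) - r - 1) ((k : ℤ) - r - 1)

theorem stmt_14 (n p k : ℕ) (hk : 1 ≤ k) (hkn : k ≤ n) (hp : 1 ≤ p) (hpn : p ≤ n) :
    B n p k = ((n : ℚ) / p) * ∑ i ∈ range k,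
      C ((n : ℤ) - p + i) ((n : ℤ) - p) * C p (i + 1) * C ((n : ℤ) - p) ((k : ℤ) - i - 1) := by
  obtain ⟨q, rfl⟩ : ∃ q, n = p + q := ⟨n - p, by omega⟩
  unfold B
  have hL : ∑ r ∈ range (p + q + 1),
      C p r * C (((p + q : ℕ) : ℤ) - p) r * C (((p + q : ℕ) : ℤ) - r - 1) ((k : ℤ) - r - 1)
      = ∑ r ∈ range k, C p r * C q r * C ((p : ℤ) + q - 1 - r) ((k : ℤ) - 1 - r) := by
    rw [← Finset.sum_subset (Finset.range_subset_range.2 (by omega : k ≤ p + q + 1))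
      (fun r hr hr' => by
        have hrk : k ≤ r := by simp only [mem_range] at hr hr'; omega
        rw [C_neg (show (k : ℤ) - r - 1 < 0 by omega)]
        ring)]
    refine Finset.sum_congr rfl fun r hr => ?_
    have e1 : ((p + q : ℕ) : ℤ) - p = (q : ℤ) := by push_cast; ring
    have e2 : ((p + q : ℕ) : ℤ) - r - 1 = (p : ℤ) + q - 1 - r := by push_cast; ring
    have e3 : (k : ℤ) - r - 1 = (k : ℤ) - 1 - r := by ring
    rw [e1, e2, e3]
  have hR : ∑ i ∈ range k,
      C (((p + q : ℕ) : ℤ) - p + i) (((p + q : ℕ) : ℤ) - p) * C p ((i : ℤ) + 1)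
        * C (((p + q : ℕ) : ℤ) - p) ((k : ℤ) - i - 1)
      = ∑ i ∈ range k, C ((q : ℤ) + i) q * C p ((i : ℤ) + 1) * C q ((k : ℤ) - 1 - i) := by
    refine Finset.sum_congr rfl fun i hi => ?_
    have e1 : ((p + q : ℕ) : ℤ) - p = (q : ℤ) := by push_cast; ring
    have e3 : (k : ℤ) - i - 1 = (k : ℤ) - 1 - i := by ring
    rw [e1, e3]
  rw [hL, hR]
  have hkey := key_all p q k hp hk
  have hk0 : (k : ℚ) ≠ 0 := by positivity
  have hp0 : (p : ℚ) ≠ 0 := by positivity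
  rw [div_mul_eq_mul_div, div_mul_eq_mul_div, div_eq_div_iff hk0 hp0]
  push_cast
  push_cast at hkey
  linear_combination ((p : ℚ) + q) * hkey
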